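/- For every integer s ≥ 1, if G is an (sP1 + P5)-free graph that contains an induced P5, then G contains a dominating induced subgraph isomorphic to rP1 + P5 for some r < s. -/

import Mathlib

/-- The disjoint union of `s` isolated vertices and a path on 5 vertices. -/
def sP1P5 (s : ℕ) : SimpleGraph (Fin s ⊕ Fin 5) where
  Adj x y := match x, y with
    | Sum.inr u, Sum.inr v => (SimpleGraph.pathGraph 5).Adj u v
    | _, _ => False
  symm := ⟨by rintro (u | u) (v | v) h <;> first | exact (h : (SimpleGraph.pathGraph 5).Adj u v).symm | simp_all⟩
  loopless := ⟨by rintro (u | u) h <;> simp_all⟩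

open SimpleGraph

/-- cast embedding between sP1P5 -/
def castEmb {m n : ℕ} (h : m ≤ n) : sP1P5 m ↪g sP1P5 n where
  toFun := Sum.map (Fin.castLE h) id
  inj' := Function.Injective.sumMap (Fin.castLE_injective h) Function.injective_id
  map_rel_iff' := by rintro (i|i) (j|j) <;> exact Iff.rfl

def p5ToS0 : sP1P5 0 ↪g SimpleGraph.pathGraph 5 where
  toFun := Sum.elim Fin.elim0 id
  inj' := by rintro (i|i) (j|j) <;> first | exact i.elim0 | exact j.elim0 |
    (intro h; simpa using h)
  map_rel_iff' := by rintro (i|i) (j|j) <;> first | exact i.elim0 | exact j.elim0 |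
    exact Iff.rfl

noncomputable def isoRange {W : Type} {H : SimpleGraph W} {V : Type} {G : SimpleGraph V}
    (f : H ↪g G) : H ≃g G.induce (Set.range f) where
  toEquiv := Equiv.ofInjective f f.injective
  map_rel_iff' := by intro a b; exact f.map_rel_iff

/-- extend an embedding by a non-dominated vertex -/
def extendEmb {V : Type} {G : SimpleGraph V} {r : ℕ} (f : sP1P5 r ↪g G)
    (v : V) (hv : v ∉ Set.range f) (hadj : ∀ x, ¬ G.Adj (f x) v) :
    sP1P5 (r + 1) ↪g G where
  toFun := Sum.elim (Fin.cons v (fun i => f (Sum.inl i))) (fun j => f (Sum.inr j))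
  inj' := by
    have hvne : ∀ x, v ≠ f x := fun x h => hv ⟨x, h.symm⟩
    rintro (i|i) (j|j) h
    · simp only [Function.Embedding.coeFn_mk, Sum.elim_inl] at h
      induction i using Fin.cases <;> induction j using Fin.cases <;>
        simp only [Fin.cons_zero, Fin.cons_succ] at h
      · rfl
      · exact absurd h (hvne _)
      · exact absurd h.symm (hvne _)
      · simpa using f.injective h
    · simp only [Function.Embedding.coeFn_mk, Sum.elim_inl, Sum.elim_inr] at h
      induction i using Fin.cases <;> simp only [Fin.cons_zero, Fin.cons_succ] at h
      · exact absurd h (hvne _)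
      · simpa using f.injective h
    · simp only [Function.Embedding.coeFn_mk, Sum.elim_inl, Sum.elim_inr] at h
      induction j using Fin.cases <;> simp only [Fin.cons_zero, Fin.cons_succ] at h
      · exact absurd h.symm (hvne _)
      · simpa using f.injective h
    · simp only [Function.Embedding.coeFn_mk, Sum.elim_inr] at h
      simpa using f.injective h
  map_rel_iff' := by
    have hadj' : ∀ x, ¬ G.Adj v (f x) := fun x h => hadj x h.symm
    rintro (i|i) (j|j)
    · constructor
      · intro h; exfalso
        simp only [Function.Embedding.coeFn_mk, Sum.elim_inl, DFunLike.coe] at h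
        induction i using Fin.cases <;> induction j using Fin.cases <;>
          simp only [Fin.cons_zero, Fin.cons_succ] at h
        · exact G.loopless.irrefl _ h
        · exact hadj' _ h
        · exact hadj _ h
        · exact (f.map_rel_iff.mp h).elim
      · intro h; exact h.elim
    · constructor
      · intro h; exfalso
        simp only [Function.Embedding.coeFn_mk, Sum.elim_inl, Sum.elim_inr, DFunLike.coe] at h
        induction i using Fin.cases <;> simp only [Fin.cons_zero, Fin.cons_succ] at h
        · exact hadj' _ h
        · exact (f.map_rel_iff.mp h).elim
      · intro h; exact h.elim
    · constructor
      · intro h; exfalso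
        simp only [Function.Embedding.coeFn_mk, Sum.elim_inl, Sum.elim_inr, DFunLike.coe] at h
        induction j using Fin.cases <;> simp only [Fin.cons_zero, Fin.cons_succ] at h
        · exact hadj _ h
        · exact (f.map_rel_iff.mp h).elim
      · intro h; exact h.elim
    · exact f.map_rel_iff

theorem stmt_2 {V : Type} [Fintype V] (G : SimpleGraph V) (s : ℕ) (hs : 1 ≤ s)
    (hfree : ¬ Nonempty (sP1P5 s ↪g G))
    (hP5 : Nonempty (SimpleGraph.pathGraph 5 ↪g G)) :
    ∃ r < s, ∃ D : Set V,
      (∀ v : V, v ∈ D ∨ ∃ u ∈ D, G.Adj u v) ∧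
      Nonempty ((G.induce D) ≃g sP1P5 r) := by
  classical
  set P : ℕ → Prop := fun r => Nonempty (sP1P5 r ↪g G) with hP
  have h0 : P 0 := ⟨hP5.some.comp p5ToS0⟩
  have hub : ∀ r, P r → r < s := by
    intro r hr
    by_contra hle
    push_neg at hle
    exact hfree ⟨hr.some.comp (castEmb hle)⟩
  set r := Nat.findGreatest P s with hrdef
  have hPr : P r := Nat.findGreatest_spec (Nat.zero_le s) h0
  have hrs : r < s := hub r hPr
  obtain ⟨f⟩ := hPr
  refine ⟨r, hrs, Set.range f, ?_, ⟨(isoRange f).symm⟩⟩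
  intro v
  by_contra hcon
  push_neg at hcon
  obtain ⟨hv1, hv2⟩ := hcon
  have hadj : ∀ x, ¬ G.Adj (f x) v := fun x h => hv2 (f x) ⟨x, rfl⟩ h
  have : P (r + 1) := ⟨extendEmb f v hv1 hadj⟩
  exact Nat.findGreatest_is_greatest (Nat.lt_succ_self r) hrs this
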